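/- Fix an integer n ≥ 3 and h₀ ∈ (0,1/2). Suppose that for each h ∈ (0,h₀) the pair (δ(h),γ(h)) solves the system at (n,h), and that δ(h) → 0 and γ(h) → π/2 as h → 0⁺. Then δ(h)·( 8(n−1)/(n(n−2)) + h + |log h| ) → π as h → 0⁺; that is, δ(h) = π/( 8(n−1)/(n(n−2)) + h + |log h| ) + o(1/|log h|). -/

import Mathlib

open MeasureTheory Real Set Filter Topology

noncomputable section

/-- `f_m(h) = (1/m)·Σ_{k=0}^{m−1} (1−h)^{2−n+k}` (for the fixed dimension `n`). -/
def fm (n m : ℕ) (h : ℝ) : ℝ :=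
  (1 / (m : ℝ)) * ∑ k ∈ Finset.range m, (1 - h) ^ ((2 : ℤ) - (n : ℤ) + (k : ℤ))

/-- `g_n(h) = f_n(h) − 2 f_{n−1}(h) + f_{n−2}(h)`. -/
def gn (n : ℕ) (h : ℝ) : ℝ := fm n n h - 2 * fm n (n - 1) h + fm n (n - 2) h

/-- `(δ,γ)` solves the system at `(n,h)`. -/
def SolvesSystem (n : ℕ) (h δ γ : ℝ) : Prop :=
  0 < δ ∧ 4 * δ ^ 2 ≤ (n : ℝ) * ((n : ℝ) - 2) ∧
  (∀ r ∈ Set.Icc h (1 - h), γ + δ * Real.log r ∈ Set.Ioo (-(π/2)) (π/2)) ∧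
  (((n : ℝ) ^ 2 - 2 * (n : ℝ)) / 2 - 2 * δ ^ 2)
      * ((n : ℝ) ^ 2 / 4 - δ ^ 2 + (n : ℝ) * δ * Real.tan (γ + δ * Real.log h))
    = (((n : ℝ) - 2) / ((n : ℝ) - 1)) * ((n : ℝ) ^ 2 / 4 + δ ^ 2) ^ 2 ∧
  ((n : ℝ) - 2) / 2 + δ * Real.tan (γ + δ * Real.log (1 - h))
    = (1 / h) * (fm n n h - gn n h * (((n : ℝ) - 2) ^ 2 / 4 + δ ^ 2))

/-- Asymptotics of `δ(h)` for solutions `(δ(h),γ(h))` of the system at `(n,h)`: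
if `δ(h) → 0` and `γ(h) → π/2` as `h → 0⁺`, then
`δ(h)·(8(n−1)/(n(n−2)) + h + |log h|) → π`. -/
theorem delta_h_nd_asymptotics (n : ℕ) (hn : 3 ≤ n) (h₀ : ℝ)
    (hh₀ : h₀ ∈ Set.Ioo (0:ℝ) (1/2)) (δ γ : ℝ → ℝ)
    (hsol : ∀ h ∈ Set.Ioo (0:ℝ) h₀, SolvesSystem n h (δ h) (γ h))
    (hδ : Filter.Tendsto δ (nhdsWithin 0 (Set.Ioo 0 h₀)) (nhds 0))
    (hγ : Filter.Tendsto γ (nhdsWithin 0 (Set.Ioo 0 h₀)) (nhds (π/2))) :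
    Filter.Tendsto
      (fun h => δ h * (8 * ((n : ℝ) - 1) / ((n : ℝ) * ((n : ℝ) - 2)) + h + |Real.log h|))
      (nhdsWithin 0 (Set.Ioo 0 h₀)) (nhds π) := by
  set l := nhdsWithin (0:ℝ) (Set.Ioo 0 h₀) with hl
  have hmem : Set.Ioo (0:ℝ) h₀ ∈ l := self_mem_nhdsWithin
  have hn3 : (3:ℝ) ≤ (n:ℝ) := by exact_mod_cast hn
  have hn0 : (n:ℝ) ≠ 0 := by linarith
  have hn1 : (n:ℝ) - 1 ≠ 0 := by linarith
  have hn2 : (n:ℝ) ^ 2 - 2 * (n:ℝ) ≠ 0 := by nlinarith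
  set θ : ℝ → ℝ := fun h => γ h + δ h * Real.log h with hθdef
  set c : ℝ := (n:ℝ) * ((n:ℝ) - 2) / (8 * ((n:ℝ) - 1)) with hc
  have hcpos : 0 < c := div_pos (by nlinarith) (by linarith)
  set F : ℝ → ℝ := fun d =>
    ((((n:ℝ)-2)/((n:ℝ)-1) * ((n:ℝ)^2/4 + d^2)^2 / (((n:ℝ)^2 - 2*(n:ℝ))/2 - 2*d^2))
      - (n:ℝ)^2/4 + d^2) / n with hF
  have hF0 : F 0 = -c := by
    simp only [hF, hc]
    have hn2' : (n:ℝ) - 2 ≠ 0 := by linarith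
    field_simp
    ring
  have hsmall : ∀ᶠ h in l, δ h ∈ Set.Ioo (-(1/2):ℝ) (1/2) :=
    hδ (Ioo_mem_nhds (by norm_num) (by norm_num))
  have hB0 : ((n:ℝ)^2 - 2*(n:ℝ))/2 - 2*(0:ℝ)^2 ≠ 0 := by nlinarith
  have hFcont : ContinuousAt F 0 := by
    have h1 : ContinuousAt (fun d:ℝ => ((n:ℝ)-2)/((n:ℝ)-1) * ((n:ℝ)^2/4 + d^2)^2) 0 := by
      fun_prop
    have h2 : ContinuousAt (fun d:ℝ => ((n:ℝ)^2 - 2*(n:ℝ))/2 - 2*d^2) 0 := by fun_prop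
    have h3 : ContinuousAt (fun d:ℝ =>
        ((n:ℝ)-2)/((n:ℝ)-1) * ((n:ℝ)^2/4 + d^2)^2 / (((n:ℝ)^2 - 2*(n:ℝ))/2 - 2*d^2)) 0 :=
      h1.div h2 hB0
    exact (((h3.sub continuousAt_const).add (by fun_prop)).div_const _)
  -- Step 1 : δ·tan θ → -c
  have htan : Tendsto (fun h => δ h * Real.tan (θ h)) l (𝓝 (-c)) := by
    have h1 : Tendsto (F ∘ δ) l (𝓝 (-c)) := hF0 ▸ hFcont.tendsto.comp hδ
    refine h1.congr' ?_
    filter_upwards [hmem, hsmall] with h hh hs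
    obtain ⟨hδpos, hδle, hrange, heq1, _⟩ := hsol h hh
    have hD : (((n:ℝ)^2 - 2*(n:ℝ))/2 - 2*(δ h)^2) ≠ 0 := by
      have := hs.2
      have := hs.1
      nlinarith
    simp only [Function.comp_apply, hF, hθdef]
    have hA : ((n:ℝ)-2)/((n:ℝ)-1) * ((n:ℝ)^2/4 + (δ h)^2)^2
          / (((n:ℝ)^2 - 2*(n:ℝ))/2 - 2*(δ h)^2)
        = (n:ℝ)^2/4 - (δ h)^2 + (n:ℝ)*(δ h)*Real.tan (γ h + δ h * Real.log h) := by
      rw [div_eq_iff hD]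
      linear_combination -heq1
    rw [hA]
    field_simp
    ring
  -- Step 2 : tan θ → -∞ hence θ → -π/2
  have hδpos : ∀ᶠ h in l, 0 < δ h := by
    filter_upwards [hmem] with h hh; exact (hsol h hh).1
  have hδ' : Tendsto δ l (𝓝[>] 0) := by
    rw [tendsto_nhdsWithin_iff]
    exact ⟨hδ, hδpos⟩
  have hinv : Tendsto (fun h => (δ h)⁻¹) l atTop := tendsto_inv_nhdsGT_zero.comp hδ'
  have htanBot : Tendsto (fun h => Real.tan (θ h)) l atBot := by
    have hmul : Tendsto (fun h => (δ h * Real.tan (θ h)) * (δ h)⁻¹) l atBot :=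
      htan.neg_mul_atTop (by linarith) hinv
    refine hmul.congr' ?_
    filter_upwards [hδpos] with h hp
    field_simp
  have hθmem : ∀ᶠ h in l, θ h ∈ Set.Ioo (-(π/2)) (π/2) := by
    filter_upwards [hmem] with h hh
    obtain ⟨_, _, hrange, _, _⟩ := hsol h hh
    exact hrange h ⟨le_rfl, by nlinarith [hh.1, hh.2, hh₀.2]⟩
  have hθtend : Tendsto θ l (𝓝 (-(π/2))) := by
    have harc : Tendsto (fun h => Real.arctan (Real.tan (θ h))) l (𝓝 (-(π/2))) :=
      (Real.tendsto_arctan_atBot.mono_right nhdsWithin_le_nhds).comp htanBot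
    refine harc.congr' ?_
    filter_upwards [hθmem] with h hh
    exact Real.arctan_tan hh.1 hh.2
  -- Step 3 : conclude
  have t1 : Tendsto (fun h => δ h * (8 * ((n:ℝ) - 1) / ((n:ℝ) * ((n:ℝ) - 2)))) l (𝓝 0) := by
    simpa using hδ.mul_const (8 * ((n:ℝ) - 1) / ((n:ℝ) * ((n:ℝ) - 2)))
  have tid : Tendsto (fun h : ℝ => h) l (𝓝 0) := tendsto_id.mono_right nhdsWithin_le_nhds
  have t2 : Tendsto (fun h => δ h * h) l (𝓝 0) := by simpa using hδ.mul tid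
  have t3 : Tendsto (fun h => γ h - θ h) l (𝓝 π) := by
    have := hγ.sub hθtend
    have hπ : π / 2 - -(π/2) = π := by ring
    rwa [hπ] at this
  have hfinal : Tendsto (fun h =>
      δ h * (8 * ((n:ℝ) - 1) / ((n:ℝ) * ((n:ℝ) - 2))) + δ h * h + (γ h - θ h)) l (𝓝 π) := by
    simpa using (t1.add t2).add t3
  refine hfinal.congr' ?_
  filter_upwards [hmem] with h hh
  have hlog : Real.log h < 0 := Real.log_neg hh.1 (by nlinarith [hh.2, hh₀.2])
  rw [abs_of_neg hlog]
  simp only [hθdef]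
  ring
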